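/- Let c ≥ 1 and let w₁ ≥ w₂ ≥ ⋯ ≥ w_c be nonnegative integers with w₁ + ⋯ + w_c = 2s + e, where s ∈ ℕ, e ≥ 1, and w₁ ≥ s + 1 (a final position in the majority game). Let M be the position whose elements are w₁, …, w_c. Then e + P(δ_e^(e)(M)) ≥ c; equivalently, if c ≥ e then 2^{c−e} divides δ_e^(e)(M). -/

import Mathlib

open Finset

/-- The weight of a subposition `S` of the position `w : I → ℕ`. -/
def wtS {I : Type*} [Fintype I] [DecidableEq I] (w : I → ℕ) (S : Finset I) : ℕ :=
  ∑ i ∈ S, w i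

/-- The Saks–Werman statistic `δ_e(w) = ∑_{S ⊆ I, ε(S) ≥ e} (-1)^{wt S}` where
`ε(S) = wt(I \ S) - wt(S)`. -/
def delta {I : Type*} [Fintype I] [DecidableEq I] (w : I → ℕ) (e : ℕ) : ℤ :=
  ∑ S ∈ Finset.univ.filter
      (fun S : Finset I => (e : ℤ) ≤ (wtS w Sᶜ : ℤ) - (wtS w S : ℤ)),
    (-1) ^ (wtS w S)

/-- The iterated statistic `δ_e^(b)`: `δ_e^(1) = δ_e` and for `b ≥ 2`,
`δ_e^(b) = ∑_{t ≥ 0} δ_{e+2t}^(b-1)`, a finite sum since `δ_d = 0` for `d > wt(I)`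
(so summing `t` over `0, …, wt(I)` suffices).  (The value at `b = 0` is junk.) -/
def deltaIt {I : Type*} [Fintype I] [DecidableEq I] (w : I → ℕ) : ℕ → ℕ → ℤ
  | 0, e => delta w e
  | 1, e => delta w e
  | (b+2), e => ∑ t ∈ Finset.range ((∑ i, w i) + 1), deltaIt w (b+1) (e + 2*t)

namespace SW
open Polynomial


/-- truncated coefficient function -/
def g (s e m : ℕ) : ℤ := if m ≤ s then (-1)^m * ((s - m + e - 1).choose (e-1) : ℤ) else 0

lemma g_of_gt {s e m : ℕ} (h : s < m) : g s e m = 0 := if_neg (by omega)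

/-- the linear functional p ↦ Σ_{n ≤ s} coeff p n * g n -/
noncomputable def L (s e : ℕ) : Polynomial ℤ →ₗ[ℤ] ℤ where
  toFun p := ∑ n ∈ range (s+1), p.coeff n * g s e n
  map_add' p q := by simp [add_mul, Finset.sum_add_distrib]
  map_smul' a p := by simp [Finset.mul_sum, mul_assoc]

lemma L_apply (s e : ℕ) (p : Polynomial ℤ) :
    L s e p = ∑ n ∈ range (s+1), p.coeff n * g s e n := rfl

lemma L_X_pow (s e n : ℕ) : L s e (X^n : Polynomial ℤ) = g s e n := by
  rw [L_apply]
  by_cases h : n ≤ s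
  · rw [Finset.sum_eq_single n]
    · simp [coeff_X_pow]
    · intro b _ hb; simp [coeff_X_pow, if_neg hb]
    · intro hn; exact absurd (mem_range.mpr (by omega)) hn
  · rw [g_of_gt (by omega), Finset.sum_eq_zero]
    intro b hb
    simp only [mem_range] at hb
    simp [coeff_X_pow, if_neg (by omega : ¬ b = n)]

lemma g_add_succ {s e : ℕ} (he : 1 ≤ e) (n : ℕ) :
    g s (e+1) n + g s (e+1) (n+1) = g s e n := by
  unfold g
  rcases lt_trichotomy n s with h | h | h
  · rw [if_pos (by omega), if_pos (by omega), if_pos (by omega)]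
    have h1 : s - n + (e+1) - 1 = (s - (n+1) + (e+1) - 1) + 1 := by omega
    have h2 : s - n + e - 1 = s - (n+1) + (e+1) - 1 := by omega
    have h3 : e + 1 - 1 = (e - 1) + 1 := by omega
    rw [h1, h2, h3, Nat.choose_succ_succ' (s - (n+1) + (e+1) - 1) (e - 1)]
    push_cast [pow_succ]
    ring
  · subst h
    rw [if_pos le_rfl, if_neg (by omega), if_pos le_rfl]
    simp [Nat.sub_self]
  · rw [if_neg (by omega), if_neg (by omega), if_neg (by omega)]
    simp

lemma g_one_add_succ {s : ℕ} (n : ℕ) (hn : n ≤ s) :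
    g s 1 n + g s 1 (n+1) = if n = s then (-1)^s else 0 := by
  unfold g
  rcases eq_or_lt_of_le hn with h | h
  · subst h
    rw [if_pos le_rfl, if_neg (by omega), if_pos rfl]
    simp
  · rw [if_pos (by omega), if_pos (by omega), if_neg (by omega)]
    simp only [Nat.sub_self, Nat.choose_self, Nat.add_sub_cancel]
    push_cast [pow_succ]
    ring_nf
    simp [Nat.choose_zero_right]

lemma L_one_add_X_mul (s E : ℕ) (q : Polynomial ℤ) :
    L s E ((1 + X) * q) = ∑ n ∈ range (s+1), q.coeff n * (g s E n + g s E (n+1)) := by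
  rw [L_apply]
  have hc : ∀ n, ((1 + X) * q).coeff n = q.coeff n + (X * q).coeff n := by
    intro n; rw [add_mul, one_mul, coeff_add]
  have h1 : ∀ n ∈ range (s+1), ((1+X)*q).coeff n * g s E n
      = q.coeff n * g s E n + (X*q).coeff n * g s E n := fun n _ => by rw [hc, add_mul]
  rw [Finset.sum_congr rfl h1, Finset.sum_add_distrib]
  simp only [mul_add]
  rw [Finset.sum_add_distrib]
  congr 1
  · -- ∑ n in range (s+1), (X*q).coeff n * g s E n = ∑ n in range (s+1), q.coeff n * g s E (n+1)
    have h2 : (∑ x ∈ range (s+1), (X * q).coeff x * g s E x)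
        = (∑ x ∈ range s, (X * q).coeff (x+1) * g s E (x+1)) + (X * q).coeff 0 * g s E 0 :=
      Finset.sum_range_succ' _ s
    have h3 : (∑ x ∈ range (s+1), q.coeff x * g s E (x+1))
        = (∑ x ∈ range s, q.coeff x * g s E (x+1)) + q.coeff s * g s E (s+1) :=
      Finset.sum_range_succ _ s
    rw [h2, h3, g_of_gt (by omega : s < s + 1)]
    simp only [Polynomial.coeff_X_mul, Polynomial.mul_coeff_zero, Polynomial.coeff_X_zero,
      zero_mul, add_zero, mul_zero]

lemma L_step (s e : ℕ) (he : 1 ≤ e) (q : Polynomial ℤ) :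
    L s (e+1) ((1 + X) * q) = L s e q := by
  rw [L_one_add_X_mul, L_apply]
  exact Finset.sum_congr rfl (fun n _ => by rw [g_add_succ he])

lemma L_one (s : ℕ) (q : Polynomial ℤ) :
    L s 1 ((1 + X) * q) = q.coeff s * (-1)^s := by
  rw [L_one_add_X_mul]
  rw [Finset.sum_eq_single s]
  · rw [g_one_add_succ s le_rfl, if_pos rfl]
  · intro b hb hbs
    rw [g_one_add_succ b (by simpa using Nat.lt_succ_iff.mp (mem_range.mp hb)), if_neg hbs,
      mul_zero]
  · intro hs; exact absurd (self_mem_range_succ s) hs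

lemma vanish (s : ℕ) : ∀ E, 1 ≤ E → ∀ j, E ≤ j → ∀ q : Polynomial ℤ,
    q.natDegree + j + 1 ≤ s + E → L s E ((1 + X)^j * q) = 0 := by
  intro E
  induction E with
  | zero => omega
  | succ e ih =>
    intro _ j hj q hdeg
    obtain ⟨j, rfl⟩ : ∃ j', j = j' + 1 := ⟨j - 1, by omega⟩
    have hre : ((1:Polynomial ℤ) + X)^(j+1) * q = (1 + X) * ((1 + X)^j * q) := by ring
    rcases Nat.eq_zero_or_pos e with he | he
    · subst he
      rw [hre, L_one]
      have : ((1 + X : Polynomial ℤ)^j * q).natDegree < s := by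
        calc ((1 + X : Polynomial ℤ)^j * q).natDegree
            ≤ ((1 + X : Polynomial ℤ)^j).natDegree + q.natDegree := natDegree_mul_le
          _ ≤ j * (1 + X : Polynomial ℤ).natDegree + q.natDegree := by
              gcongr; exact natDegree_pow_le
          _ ≤ j * 1 + q.natDegree := by
              gcongr; exact le_trans (natDegree_add_le _ _) (by simp)
          _ < s := by omega
      rw [Polynomial.coeff_eq_zero_of_natDegree_lt this, zero_mul]
    · rw [hre, L_step s e he, ih he j (by omega) q (by omega)]



noncomputable def u (w : ℕ) : Polynomial ℤ :=
  if Even w then -(∑ k ∈ range w, (-X)^k) else ∑ k ∈ range w, (-X)^k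

noncomputable def v (w : ℕ) : Polynomial ℤ := if Even w then 1 else 0

lemma u_zero : u 0 = 0 := by simp [u]

lemma decomp (w : ℕ) : (1 + X) * u w + 2 * v w = 1 + X^w := by
  have hg := geom_sum_mul (-X : Polynomial ℤ) w
  by_cases h : Even w
  · rw [u, v, if_pos h, if_pos h]
    rw [h.neg_pow] at hg
    linear_combination hg
  · rw [u, v, if_neg h, if_neg h]
    rw [(Nat.not_even_iff_odd.mp h).neg_pow] at hg
    linear_combination -hg

lemma u_natDegree (w : ℕ) : (u w).natDegree ≤ w - 1 := by
  have : (∑ k ∈ range w, (-X : Polynomial ℤ)^k).natDegree ≤ w - 1 := by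
    apply natDegree_sum_le_of_forall_le
    intro k hk
    calc ((-X : Polynomial ℤ)^k).natDegree ≤ k * (-X : Polynomial ℤ).natDegree :=
          natDegree_pow_le
      _ ≤ w - 1 := by
          rw [natDegree_neg, natDegree_X, mul_one]
          exact Nat.le_sub_one_of_lt (mem_range.mp hk)
  unfold u
  split <;> simpa

lemma v_natDegree (w : ℕ) : (v w).natDegree = 0 := by
  unfold v; split <;> simp

lemma L_C_mul (s e : ℕ) (a : ℤ) (p : Polynomial ℤ) : L s e (C a * p) = a * L s e p := by
  rw [← smul_eq_C_mul, map_smul, smul_eq_mul]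

lemma key {ι : Type*} [DecidableEq ι] (s e : ℕ) (he : 1 ≤ e) (J : Finset ι) (w : ι → ℕ)
    (hD : (∑ i ∈ J, w i) + 1 ≤ s + e) :
    (2:ℤ)^(J.card + 1 - e) ∣ L s e (∏ i ∈ J, (1 + X^(w i))) := by
  have hprod : (∏ i ∈ J, ((1:Polynomial ℤ) + X^(w i)))
      = ∑ T ∈ J.powerset, C ((2:ℤ)^((J \ T).card)) *
          ((1+X)^T.card * ((∏ i ∈ T, u (w i)) * (∏ i ∈ J \ T, v (w i)))) := by
    calc ∏ i ∈ J, ((1:Polynomial ℤ) + X^(w i))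
        = ∏ i ∈ J, ((1+X) * u (w i) + 2 * v (w i)) :=
          Finset.prod_congr rfl fun i _ => (decomp (w i)).symm
      _ = ∑ T ∈ J.powerset, (∏ i ∈ T, (1+X) * u (w i)) * (∏ i ∈ J \ T, 2 * v (w i)) :=
          Finset.prod_add _ _ _
      _ = _ := by
          refine Finset.sum_congr rfl fun T hT => ?_
          rw [Finset.prod_mul_distrib, Finset.prod_mul_distrib, Finset.prod_const,
            Finset.prod_const, C_pow]
          have : (C (2:ℤ)) = (2 : Polynomial ℤ) := by norm_num
          rw [this]
          ring
  rw [hprod, map_sum]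
  apply Finset.dvd_sum
  intro T hT
  rw [L_C_mul]
  have hTJ : T ⊆ J := Finset.mem_powerset.mp hT
  by_cases hcard : T.card + 1 ≤ e
  · apply Dvd.dvd.mul_right
    apply pow_dvd_pow
    rw [Finset.card_sdiff, Finset.inter_eq_left.mpr hTJ]
    have := Finset.card_le_card hTJ
    omega
  · by_cases hzero : ∃ i ∈ T, w i = 0
    · obtain ⟨i, hi, hwi⟩ := hzero
      have h0 : (∏ i ∈ T, u (w i)) = 0 := Finset.prod_eq_zero hi (by rw [hwi, u_zero])
      rw [h0, zero_mul, mul_zero, map_zero, mul_zero]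
      exact dvd_zero _
    · push_neg at hzero
      have hdeg : ((∏ i ∈ T, u (w i)) * (∏ i ∈ J \ T, v (w i))).natDegree + T.card + 1 ≤ s + e := by
        have h1 : (∏ i ∈ T, u (w i)).natDegree ≤ ∑ i ∈ T, (w i - 1) :=
          le_trans (natDegree_prod_le _ _) (Finset.sum_le_sum fun i _ => u_natDegree (w i))
        have h2 : (∏ i ∈ J \ T, v (w i)).natDegree ≤ 0 :=
          le_trans (natDegree_prod_le _ _) (by simp [v_natDegree])
        have h3 : (∑ i ∈ T, (w i - 1)) + T.card = ∑ i ∈ T, w i := by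
          rw [Finset.card_eq_sum_ones, ← Finset.sum_add_distrib]
          exact Finset.sum_congr rfl fun i hi => by have := hzero i hi; omega
        have h4 : (∑ i ∈ T, w i) ≤ ∑ i ∈ J, w i :=
          Finset.sum_le_sum_of_subset hTJ
        have h5 := natDegree_mul_le (p := ∏ i ∈ T, u (w i)) (q := ∏ i ∈ J \ T, v (w i))
        omega
      rw [vanish s e he T.card (by omega) _ hdeg, mul_zero]
      exact dvd_zero _


def G (s b t m : ℕ) : ℤ := if m + t ≤ s then (-1)^m * ((s - t - m + b).choose b : ℤ) else 0

lemma Gsum (s M b t m : ℕ) (hsM : s ≤ M) :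
    ∑ t' ∈ range (M+1), G s b (t+t') m = G s (b+1) t m := by
  by_cases h : m + t ≤ s
  · set K := s - t - m with hK
    have hstep : ∀ t' ∈ range (M+1), G s b (t+t') m
        = if t' ≤ K then (-1)^m * ((K - t' + b).choose b : ℤ) else 0 := by
      intro t' _
      by_cases h2 : t' ≤ K
      · rw [G, if_pos (by omega), if_pos h2]
        congr 3
        omega
      · rw [G, if_neg (by omega), if_neg h2]
    rw [Finset.sum_congr rfl hstep, ← Finset.sum_filter]
    have hf : (range (M+1)).filter (· ≤ K) = range (K+1) := by
      ext x; simp only [Finset.mem_filter, Finset.mem_range]; omega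
    rw [hf, ← Finset.mul_sum]
    have hrefl := Finset.sum_range_reflect (fun j => (((j + b).choose b : ℕ) : ℤ)) (K+1)
    simp only [Nat.add_sub_cancel] at hrefl
    rw [hrefl, ← Nat.cast_sum, Nat.sum_range_add_choose, G, if_pos h]
    have hq : s - t - m + (b+1) = K + b + 1 := by omega
    rw [hq]
  · rw [G, if_neg h]
    apply Finset.sum_eq_zero
    intro t' _
    rw [G, if_neg (by omega)]

lemma CF {I : Type*} [Fintype I] [DecidableEq I] (w : I → ℕ) (s e : ℕ)
    (hsum : ∑ i, w i = 2*s+e) :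
    ∀ b t, deltaIt w (b+1) (e + 2*t) = ∑ S : Finset I, G s b t (wtS w S) := by
  intro b
  induction b with
  | zero =>
    intro t
    show delta w (e + 2*t) = _
    rw [delta, Finset.sum_filter]
    refine Finset.sum_congr rfl fun S _ => ?_
    have hS : wtS w S + wtS w Sᶜ = 2*s+e := by
      rw [wtS, wtS, Finset.sum_add_sum_compl]; exact hsum
    have hcond : (((e + 2*t : ℕ) : ℤ) ≤ (wtS w Sᶜ : ℤ) - (wtS w S : ℤ)) ↔ wtS w S + t ≤ s := by
      omega
    rw [G]
    by_cases h : wtS w S + t ≤ s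
    · rw [if_pos (hcond.mpr h), if_pos h]
      simp
    · rw [if_neg (fun hh => h (hcond.mp hh)), if_neg h]
  | succ b ih =>
    intro t
    show (∑ t' ∈ range ((∑ i, w i) + 1), deltaIt w (b+1) ((e + 2*t) + 2*t')) = _
    have h1 : ∀ t' ∈ range ((∑ i, w i) + 1),
        deltaIt w (b+1) ((e + 2*t) + 2*t') = ∑ S : Finset I, G s b (t+t') (wtS w S) := by
      intro t' _
      rw [show (e + 2*t) + 2*t' = e + 2*(t+t') by ring, ih (t+t')]
    rw [Finset.sum_congr rfl h1, Finset.sum_comm]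
    refine Finset.sum_congr rfl fun S _ => ?_
    rw [hsum]
    exact Gsum s (2*s+e) b t (wtS w S) (by omega)


end SW

open Polynomial in
/-- for a final position `w₁ ≥ … ≥ w_c` with `w₁ + … + w_c = 2s+e`,
`e ≥ 1` and `w₁ ≥ s+1`, one has `e + P(δ_e^(e)) ≥ c`; equivalently, if `c ≥ e` then
`2^{c−e}` divides `δ_e^(e)`. -/
theorem final_position_bound
    (c s e : ℕ) (hc : 1 ≤ c) (he : 1 ≤ e)
    (w : Fin c → ℕ) (hmono : Antitone w)
    (hsum : ∑ i, w i = 2 * s + e)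
    (hw1 : s + 1 ≤ w ⟨0, hc⟩) :
    (c : ℕ∞) ≤ (e : ℕ∞) + emultiplicity (2 : ℤ) (deltaIt w e e)
    ∧ (e ≤ c → (2 : ℤ) ^ (c - e) ∣ deltaIt w e e) := by
  classical
  set i0 : Fin c := ⟨0, hc⟩ with hi0
  set J : Finset (Fin c) := Finset.univ.erase i0 with hJ
  have hCF := SW.CF w s e hsum (e-1) 0
  have he1 : e - 1 + 1 = e := by omega
  simp only [he1, Nat.mul_zero, Nat.add_zero] at hCF
  have hg0 : ∀ S : Finset (Fin c), i0 ∈ S → SW.G s (e-1) 0 (wtS w S) = 0 := by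
    intro S hS
    rw [SW.G, if_neg]
    have hle : w i0 ≤ wtS w S :=
      Finset.single_le_sum (f := w) (fun i _ => Nat.zero_le _) hS
    omega
  have hsplit : (∑ S : Finset (Fin c), SW.G s (e-1) 0 (wtS w S))
      = ∑ T ∈ J.powerset, SW.G s (e-1) 0 (wtS w T) := by
    have hins : (Finset.univ : Finset (Fin c)) = insert i0 J :=
      (Finset.insert_erase (Finset.mem_univ i0)).symm
    rw [show (Finset.univ : Finset (Finset (Fin c)))
        = (Finset.univ : Finset (Fin c)).powerset from (Finset.powerset_univ).symm, hins,
      Finset.sum_powerset_insert (Finset.notMem_erase i0 _)]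
    have hz : ∑ T ∈ J.powerset, SW.G s (e-1) 0 (wtS w (insert i0 T)) = 0 :=
      Finset.sum_eq_zero fun T _ => hg0 _ (Finset.mem_insert_self _ _)
    rw [hz, add_zero]
  have hGg : ∀ m, SW.G s (e-1) 0 m = SW.g s e m := by
    intro m
    rw [SW.G, SW.g]
    have h1 : s - 0 - m + (e-1) = s - m + e - 1 := by omega
    rw [h1, Nat.add_zero]
  have hpoly : (∑ T ∈ J.powerset, SW.g s e (wtS w T))
      = SW.L s e (∏ i ∈ J, (1 + X^(w i))) := by
    have hpa : (∏ i ∈ J, ((X : Polynomial ℤ)^(w i) + 1))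
        = ∑ T ∈ J.powerset, (X : Polynomial ℤ)^(wtS w T) := by
      rw [Finset.prod_add]
      refine Finset.sum_congr rfl fun T _ => ?_
      rw [Finset.prod_const_one, mul_one, Finset.prod_pow_eq_pow_sum]
      rfl
    have hc2 : (∏ i ∈ J, ((1:Polynomial ℤ) + X^(w i)))
        = ∑ T ∈ J.powerset, (X : Polynomial ℤ)^(wtS w T) := by
      rw [← hpa]; exact Finset.prod_congr rfl fun i _ => add_comm _ _
    rw [hc2, map_sum]
    exact Finset.sum_congr rfl fun T _ => (SW.L_X_pow s e (wtS w T)).symm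
  have hJcard : J.card = c - 1 := by
    rw [hJ, Finset.card_erase_of_mem (Finset.mem_univ i0), Finset.card_univ, Fintype.card_fin]
  have hD : (∑ i ∈ J, w i) + 1 ≤ s + e := by
    have hsplit2 : w i0 + ∑ i ∈ J, w i = ∑ i, w i :=
      Finset.add_sum_erase _ w (Finset.mem_univ i0)
    omega
  have hkey := SW.key s e he J w hD
  rw [hJcard, show c - 1 + 1 - e = c - e by omega] at hkey
  have hchain : deltaIt w e e = SW.L s e (∏ i ∈ J, (1 + X^(w i))) := by
    rw [hCF, hsplit, Finset.sum_congr rfl (fun T _ => hGg (wtS w T)), hpoly]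
  have hdvd : (2:ℤ)^(c-e) ∣ deltaIt w e e := by rw [hchain]; exact hkey
  refine ⟨?_, fun _ => hdvd⟩
  rcases le_or_gt e c with hec | hec
  · calc (c : ℕ∞) = (e : ℕ∞) + ((c - e : ℕ) : ℕ∞) := by
          rw [← Nat.cast_add]; congr 1; omega
      _ ≤ (e : ℕ∞) + emultiplicity (2 : ℤ) (deltaIt w e e) :=
          add_le_add_right (le_emultiplicity_of_pow_dvd hdvd) _
  · calc (c : ℕ∞) ≤ (e : ℕ∞) := Nat.cast_le.mpr hec.le
      _ ≤ _ := le_self_add
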